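/- Let [n] = {1,…,n} be partitioned into nonempty parts V_1,…,V_r, each consisting of consecutive integers, and let G be the complete multipartite graph on [n] with these parts, i.e., {i,j} ∈ E(G) if and only if i and j lie in different parts. Then 1,2,…,n is a perfect elimination order of G^c and, for every k ≥ 0, the k-th homological shift ideal HS_k(I(G)) ⊆ K[x_1,…,x_n] has linear quotients. -/

import Mathlib

open MvPolynomial

/-- An ideal of `K[x_1,…,x_n]` is *generated by variables* if it is the span of the
image of a subset of the variables. -/
def genByVars {K : Type*} [Field K] {n : ℕ} (I : Ideal (MvPolynomial (Fin n) K)) : Prop :=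
  ∃ T : Set (Fin n), I = Ideal.span (MvPolynomial.X '' T)
/-- A polynomial is a monomial (with coefficient `1`). -/
def IsMonomialElt {K : Type*} [Field K] {n : ℕ} (p : MvPolynomial (Fin n) K) : Prop :=
  ∃ a : Fin n →₀ ℕ, p = MvPolynomial.monomial a 1
/-- A monomial ideal has *linear quotients* if its minimal monomial generators admit an
ordering `u 0, u 1, …` such that each colon ideal `(u_0,…,u_{i-1}) : u_i` is generated by a
subset of the variables.  (The conditions that the `u i` are monomials, pairwise
non-dividing, and generate `I` say exactly that they are the minimal monomial generators
of `I`.) -/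
def HasLinearQuotients {K : Type*} [Field K] {n : ℕ}
    (I : Ideal (MvPolynomial (Fin n) K)) : Prop :=
  ∃ (m : ℕ) (u : Fin m → MvPolynomial (Fin n) K),
    (∀ i, IsMonomialElt (u i)) ∧
    (∀ i j, i ≠ j → ¬ u i ∣ u j) ∧
    Ideal.span (Set.range u) = I ∧
    ∀ i : Fin m,
      genByVars ((Ideal.span (u '' {j | j < i})).colon (Ideal.span {u i}))
/-- The natural ordering `1, 2, …, n` of the vertices is a perfect elimination order of
`H`: for each vertex, its neighbourhood among the later vertices is a clique. -/
def natPEO {n : ℕ} (H : SimpleGraph (Fin n)) : Prop :=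
  ∀ i j k : Fin n, i < j → i < k → j ≠ k → H.Adj i j → H.Adj i k → H.Adj j k

/-- The reversed ordering `n, n-1, …, 1` of the vertices is a perfect elimination order of
`H`: for each vertex, its neighbourhood among the earlier-labelled vertices is a clique. -/
def revPEO {n : ℕ} (H : SimpleGraph (Fin n)) : Prop :=
  ∀ i j k : Fin n, j < i → k < i → j ≠ k → H.Adj i j → H.Adj i k → H.Adj j k
/-- The generating monomials of the `k`-th homological shift ideal `HS_k(I(G))`:
all monomials `x_A x_B` with `A, B` nonempty, `max A < min B`, `|A ∪ B| = k + 2` and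
`{max A, b} ∈ E(G)` for all `b ∈ B`. -/
def HSgens (K : Type*) [Field K] {n : ℕ} (G : SimpleGraph (Fin n)) (k : ℕ) :
    Set (MvPolynomial (Fin n) K) :=
  {w | ∃ A B : Finset (Fin n), A.Nonempty ∧ B.Nonempty ∧
    (∀ a ∈ A, ∀ b ∈ B, a < b) ∧ (A ∪ B).card = k + 2 ∧
    (∃ a0 ∈ A, (∀ a ∈ A, a ≤ a0) ∧ ∀ b ∈ B, G.Adj a0 b) ∧
    w = (∏ i ∈ A, MvPolynomial.X i) * ∏ i ∈ B, MvPolynomial.X i}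
/-- The complete multipartite graph on `Fin n` determined by the part function `p`:
two vertices are adjacent iff they lie in different parts. -/
def multipartiteGraph {n r : ℕ} (p : Fin n → Fin r) : SimpleGraph (Fin n) where
  Adj i j := p i ≠ p j
  symm := ⟨fun i j h => h.symm⟩
  loopless := ⟨fun i h => h rfl⟩

section Aux

open Finset

namespace HSaux

variable {n : ℕ}

/-- Exponent vector of the squarefree monomial `x_S`. -/
noncomputable def eS (S : Finset (Fin n)) : Fin n →₀ ℕ := ∑ i ∈ S, Finsupp.single i 1

lemma eS_apply (S : Finset (Fin n)) (q : Fin n) :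
    eS S q = if q ∈ S then 1 else 0 := by
  classical
  rw [eS, Finset.sum_apply']
  simp only [Finsupp.single_apply]
  exact Finset.sum_ite_eq' S q (fun _ => 1)

lemma eS_apply_mem {S : Finset (Fin n)} {q : Fin n} (h : q ∈ S) : eS S q = 1 := by
  rw [eS_apply, if_pos h]

lemma eS_apply_not_mem {S : Finset (Fin n)} {q : Fin n} (h : q ∉ S) : eS S q = 0 := by
  rw [eS_apply, if_neg h]

lemma eS_le_iff {S : Finset (Fin n)} {m : Fin n →₀ ℕ} :
    eS S ≤ m ↔ ∀ q ∈ S, 1 ≤ m q := by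
  rw [Finsupp.le_def]
  constructor
  · intro h q hq
    have := h q
    rwa [eS_apply_mem hq] at this
  · intro h q
    rw [eS_apply]
    split
    · exact h _ ‹_›
    · exact Nat.zero_le _

lemma subset_of_eS_le {S T : Finset (Fin n)} (h : eS S ≤ eS T) : S ⊆ T := by
  intro q hq
  have := eS_le_iff.mp h q hq
  by_contra hqT
  rw [eS_apply_not_mem hqT] at this
  omega

lemma eS_union {A B : Finset (Fin n)} (h : Disjoint A B) :
    eS (A ∪ B) = eS A + eS B := Finset.sum_union h

lemma prod_X_eq {K : Type*} [CommSemiring K] (S : Finset (Fin n)) :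
    (∏ i ∈ S, MvPolynomial.X i : MvPolynomial (Fin n) K)
      = MvPolynomial.monomial (eS S) 1 := by
  classical
  induction S using Finset.induction_on with
  | empty => simp [eS]
  | @insert a s h ih =>
      have he : eS (insert a s) = Finsupp.single a 1 + eS s := by
        rw [eS, Finset.sum_insert h]; rfl
      rw [Finset.prod_insert h, ih, MvPolynomial.X, MvPolynomial.monomial_mul, one_mul, he]

end HSaux

end Aux

section Comb

open Finset

namespace HSaux

variable {n r : ℕ}

open scoped Classical in
/-- The family of size-`k+2` non-monochromatic subsets. -/
noncomputable def Fam (p : Fin n → Fin r) (k : ℕ) : Finset (Finset (Fin n)) :=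
  Finset.univ.filter fun S => S.card = k + 2 ∧ ∃ v ∈ S, ∃ w ∈ S, p v ≠ p w

lemma mem_Fam {p : Fin n → Fin r} {k : ℕ} {S : Finset (Fin n)} :
    S ∈ Fam p k ↔ S.card = k + 2 ∧ ∃ v ∈ S, ∃ w ∈ S, p v ≠ p w := by
  classical
  simp [Fam]

/-- The exchange lemma: if `T <_colex S` are both in the family, there is `q ∈ T \ S`
and `S' ∈ Fam` with `S' <_colex S` and `S' \ S = {q}`. -/
lemma exchange {p : Fin n → Fin r} {k : ℕ} {S T : Finset (Fin n)}
    (hS : S ∈ Fam p k) (hT : T ∈ Fam p k)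
    (hlt : toColex T < toColex S) :
    ∃ q S', S' ∈ Fam p k ∧ toColex S' < toColex S ∧
      S' \ S = {q} ∧ q ∈ T ∧ q ∉ S := by
  classical
  obtain ⟨hScard, hSnm⟩ := mem_Fam.mp hS
  obtain ⟨hTcard, hTnm⟩ := mem_Fam.mp hT
  obtain ⟨t, htS, htT, hmax⟩ := Finset.Colex.toColex_lt_toColex_iff_exists_forall_lt.mp hlt
  have hTS : (T \ S).Nonempty := by
    rw [Finset.sdiff_nonempty]
    intro hsub
    have : T = S := Finset.eq_of_subset_of_card_le hsub (by omega)
    exact htT (this ▸ htS)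
  -- the candidate exchanged set for a given q
  have key : ∀ q ∈ T \ S,
      (insert q (S.erase t)).card = k + 2 ∧
      toColex (insert q (S.erase t)) < toColex S ∧
      insert q (S.erase t) \ S = {q} := by
    intro q hq
    rw [Finset.mem_sdiff] at hq
    obtain ⟨hqT, hqS⟩ := hq
    have hqe : q ∉ S.erase t := fun h => hqS (Finset.mem_of_mem_erase h)
    have hqt : q ≠ t := fun h => hqS (h ▸ htS)
    refine ⟨?_, ?_, ?_⟩
    · rw [Finset.card_insert_of_notMem hqe, Finset.card_erase_of_mem htS, hScard]
      omega
    · refine Finset.Colex.toColex_lt_toColex_iff_exists_forall_lt.mpr ⟨t, htS, ?_, ?_⟩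
      · simp [Finset.mem_insert, Finset.mem_erase, hqt.symm]
      · intro b hb hbS
        rcases Finset.mem_insert.mp hb with h | h
        · subst h; exact hmax b hqT hbS
        · exact absurd (Finset.mem_of_mem_erase h) hbS
    · ext v
      simp only [Finset.mem_sdiff, Finset.mem_insert, Finset.mem_erase, Finset.mem_singleton]
      constructor
      · rintro ⟨h | ⟨_, hv⟩, hvS⟩
        · exact h
        · exact absurd hv hvS
      · rintro rfl; exact ⟨Or.inl rfl, hqS⟩
  -- find a q making the exchanged set non-monochromatic
  by_cases hmono : ∃ q ∈ T \ S, ∃ v ∈ insert q (S.erase t), ∃ w ∈ insert q (S.erase t), p v ≠ p w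
  · obtain ⟨q, hq, hnm⟩ := hmono
    obtain ⟨hcard, hltc, hdiff⟩ := key q hq
    rw [Finset.mem_sdiff] at hq
    exact ⟨q, insert q (S.erase t), mem_Fam.mpr ⟨hcard, hnm⟩, hltc, hdiff, hq.1, hq.2⟩
  · -- all exchanged sets are monochromatic; derive that T is monochromatic, contradiction
    exfalso
    push_neg at hmono
    -- S.erase t is nonempty
    have herase : (S.erase t).Nonempty := by
      rw [← Finset.card_pos, Finset.card_erase_of_mem htS, hScard]; omega
    obtain ⟨s0, hs0⟩ := herase
    have hall : ∀ v ∈ T, p v = p s0 := by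
      intro v hv
      by_cases hvS : v ∈ S
      · have hvt : v ≠ t := fun h => htT (h ▸ hv)
        have hve : v ∈ S.erase t := Finset.mem_erase.mpr ⟨hvt, hvS⟩
        obtain ⟨q0, hq0⟩ := hTS
        have := hmono q0 hq0 v (Finset.mem_insert_of_mem hve) s0
          (Finset.mem_insert_of_mem hs0)
        exact not_not.mp (by simpa using this)
      · have hvTS : v ∈ T \ S := Finset.mem_sdiff.mpr ⟨hv, hvS⟩
        have := hmono v hvTS v (Finset.mem_insert_self v _) s0
          (Finset.mem_insert_of_mem hs0)
        exact not_not.mp (by simpa using this)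
    obtain ⟨v, hv, w, hw, hvw⟩ := hTnm
    exact hvw ((hall v hv).trans (hall w hw).symm)

end HSaux

end Comb

section Gens

open Finset MvPolynomial

namespace HSaux

variable {K : Type*} [Field K] {n r : ℕ}

lemma HSgens_eq (p : Fin n → Fin r)
    (hconsec : ∀ a b c : Fin n, a ≤ b → b ≤ c → p a = p c → p a = p b) (k : ℕ) :
    HSgens K (multipartiteGraph p) k
      = (fun S => (monomial (eS S) (1 : K))) '' {S : Finset (Fin n) | S ∈ Fam p k} := by
  classical
  ext w
  constructor
  · rintro ⟨A, B, hA, hB, hab, hcard, ⟨a0, ha0A, -, ha0adj⟩, rfl⟩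
    have hdisj : Disjoint A B := by
      rw [Finset.disjoint_left]
      intro a haA haB
      exact absurd (hab a haA a haB) (lt_irrefl a)
    refine ⟨A ∪ B, ?_, ?_⟩
    · obtain ⟨b0, hb0⟩ := hB
      refine Set.mem_setOf.mpr (mem_Fam.mpr ⟨hcard, a0, Finset.mem_union_left _ ha0A,
        b0, Finset.mem_union_right _ hb0, ?_⟩)
      exact ha0adj b0 hb0
    · show (monomial (eS (A ∪ B)) (1 : K)) = _
      rw [prod_X_eq, prod_X_eq, monomial_mul, one_mul, eS_union hdisj]
  · rintro ⟨S, hS, rfl⟩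
    obtain ⟨hcard, v0, hv0, w0, hw0, hvw⟩ := mem_Fam.mp (Set.mem_setOf.mp hS)
    have hSne : S.Nonempty := ⟨v0, hv0⟩
    set M := S.max' hSne with hM
    have hMS : M ∈ S := S.max'_mem hSne
    set c := p M with hc
    set B := S.filter (fun v => p v = c) with hBdef
    set A := S.filter (fun v => ¬ p v = c) with hAdef
    have hunion : A ∪ B = S := by
      rw [hAdef, hBdef, Finset.union_comm]
      exact Finset.filter_union_filter_not_eq _ S
    have hdisj : Disjoint A B := by
      rw [hAdef, hBdef, Finset.disjoint_left]
      intro a ha hb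
      exact (Finset.mem_filter.mp ha).2 (Finset.mem_filter.mp hb).2
    have hBne : B.Nonempty := ⟨M, Finset.mem_filter.mpr ⟨hMS, rfl⟩⟩
    have hAne : A.Nonempty := by
      by_cases h0 : p v0 = c
      · by_cases h1 : p w0 = c
        · exact absurd (h0.trans h1.symm) hvw
        · exact ⟨w0, Finset.mem_filter.mpr ⟨hw0, h1⟩⟩
      · exact ⟨v0, Finset.mem_filter.mpr ⟨hv0, h0⟩⟩
    have hltAB : ∀ a ∈ A, ∀ b ∈ B, a < b := by
      intro a ha b hb
      replace ha := Finset.mem_filter.mp ha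
      replace hb := Finset.mem_filter.mp hb
      by_contra hnlt
      push_neg at hnlt
      -- b ≤ a ≤ M and p b = p M, hence p a = p M = c
      have haM : a ≤ M := S.le_max' a ha.1
      have hbM : p b = p M := hb.2
      have := hconsec b a M hnlt haM hbM
      exact ha.2 (this.symm.trans hb.2)
    refine ⟨A, B, hAne, hBne, hltAB, by rw [hunion]; exact hcard,
      ⟨A.max' hAne, A.max'_mem hAne, fun a ha => A.le_max' a ha, ?_⟩, ?_⟩
    · intro b hb
      have hamem := Finset.mem_filter.mp (A.max'_mem hAne)
      have hb' := Finset.mem_filter.mp hb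
      show p (A.max' hAne) ≠ p b
      rw [hb'.2]
      exact hamem.2
    · rw [prod_X_eq, prod_X_eq, monomial_mul, one_mul, ← eS_union hdisj, hunion]

end HSaux

end Gens

section Main

open Finset MvPolynomial Finset.Colex

namespace HSaux

variable {K : Type*} [Field K] {n r : ℕ}

theorem main (p : Fin n → Fin r)
    (hconsec : ∀ a b c : Fin n, a ≤ b → b ≤ c → p a = p c → p a = p b) (k : ℕ) :
    HasLinearQuotients (Ideal.span (HSgens K (multipartiteGraph p) k)) := by
  classical
  set F : Finset (Finset (Fin n)) := Fam p k with hF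
  set F' : Finset (Colex (Finset (Fin n))) := F.image toColex with hF'
  set m := F'.card with hm
  set e := F'.orderIsoOfFin rfl with he
  set SS : Fin m → Finset (Fin n) := fun i => ofColex (e i).1 with hSS
  have hmemF : ∀ i, SS i ∈ F := by
    intro i
    obtain ⟨S₀, hS₀, hS₀e⟩ := Finset.mem_image.mp (e i).2
    have hx : SS i = S₀ := by
      show ofColex (e i).1 = S₀
      rw [← hS₀e]; rfl
    rwa [hx]
  have hcardSS : ∀ i, (SS i).card = k + 2 := fun i => (mem_Fam.mp (hmemF i)).1
  have horder : ∀ i j : Fin m, i < j ↔ toColex (SS i) < toColex (SS j) := by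
    intro i j
    rw [← e.lt_iff_lt, ← Subtype.coe_lt_coe]; rfl
  have hinj : Function.Injective SS := by
    intro i j hij
    have : toColex (SS i) = toColex (SS j) := by rw [hij]
    rcases lt_trichotomy i j with h | h | h
    · exact absurd this ((horder i j).mp h).ne
    · exact h
    · exact absurd this.symm ((horder j i).mp h).ne
  have hrange : Set.range SS = ↑F := by
    ext S
    constructor
    · rintro ⟨i, rfl⟩; exact hmemF i
    · intro hS
      have hS' : toColex S ∈ F' := by rw [hF']; exact Finset.mem_image_of_mem _ hS
      obtain ⟨i, hi⟩ := e.surjective ⟨toColex S, hS'⟩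
      exact ⟨i, by rw [hSS]; simp only; rw [hi]; rfl⟩
  -- the generators
  refine ⟨m, fun i => monomial (eS (SS i)) 1, fun i => ⟨eS (SS i), rfl⟩, ?_, ?_, ?_⟩
  -- pairwise non-dividing
  · intro i j hij hdvd
    have hmem : (monomial (eS (SS j)) (1 : K)) ∈
        Ideal.span ((fun s => monomial s (1 : K)) '' {eS (SS i)}) := by
      rw [Set.image_singleton]
      exact Ideal.mem_span_singleton.mpr hdvd
    have := mem_ideal_span_monomial_image.mp hmem (eS (SS j)) ?_
    · obtain ⟨si, hsi, hle⟩ := this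
      rw [Set.mem_singleton_iff] at hsi
      subst hsi
      have hsub : SS i ⊆ SS j := subset_of_eS_le hle
      have heq : SS i = SS j :=
        Finset.eq_of_subset_of_card_le hsub (by rw [hcardSS i, hcardSS j])
      exact hij (hinj heq)
    · rw [MvPolynomial.mem_support_iff, MvPolynomial.coeff_monomial, if_pos rfl]
      exact one_ne_zero
  -- generating
  · have hrangeu : Set.range (fun i => monomial (eS (SS i)) (1 : K))
        = (fun S => monomial (eS S) (1 : K)) '' {S : Finset (Fin n) | S ∈ Fam p k} := by
      have : (fun i => monomial (eS (SS i)) (1 : K))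
          = (fun S => monomial (eS S) (1 : K)) ∘ SS := rfl
      rw [this, Set.range_comp, hrange]
      rfl
    rw [hrangeu, ← HSgens_eq p hconsec k]
  -- linear quotients
  · intro i
    set Si := SS i with hSi
    set Q : Set (Fin n) :=
      {q | ∃ S', S' ∈ F ∧ toColex S' < toColex Si ∧ S' \ Si = {q}} with hQ
    have hEarlier : (fun i => monomial (eS (SS i)) (1 : K)) '' {j | j < i}
        = (fun s => monomial s (1 : K)) ''
            (eS '' {S : Finset (Fin n) | S ∈ F ∧ toColex S < toColex Si}) := by
      ext w
      constructor
      · rintro ⟨j, hj, rfl⟩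
        exact ⟨eS (SS j), ⟨SS j, ⟨hmemF j, (horder j i).mp hj⟩, rfl⟩, rfl⟩
      · rintro ⟨s, ⟨S, ⟨hSF, hSlt⟩, rfl⟩, rfl⟩
        have : S ∈ Set.range SS := by rw [hrange]; exact hSF
        obtain ⟨j, rfl⟩ := this
        exact ⟨j, (horder j i).mpr hSlt, rfl⟩
    refine ⟨Q, le_antisymm ?_ ?_⟩
    · -- colon ⊆ span of variables
      intro f hf
      rw [Ideal.mem_colon_span_singleton, hEarlier] at hf
      rw [mem_ideal_span_X_image]
      intro m0 hm0
      have hsup : m0 + eS Si ∈ (f * monomial (eS Si) (1 : K)).support := by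
        rw [MvPolynomial.mem_support_iff, MvPolynomial.coeff_mul_monomial, mul_one]
        exact MvPolynomial.mem_support_iff.mp hm0
      obtain ⟨si, ⟨S', ⟨hS'F, hS'lt⟩, rfl⟩, hle⟩ :=
        mem_ideal_span_monomial_image.mp hf _ hsup
      obtain ⟨q, S'', hS''F, hS''lt, hdiff, hqT, hqSi⟩ :=
        exchange (hmemF i) hS'F hS'lt
      refine ⟨q, ⟨S'', hS''F, hS''lt, hdiff⟩, ?_⟩
      have h1 := eS_le_iff.mp hle q hqT
      rw [Finsupp.add_apply, eS_apply_not_mem hqSi, add_zero] at h1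
      omega
    · -- span of variables ⊆ colon
      rw [Ideal.span_le]
      rintro w ⟨q, hq, rfl⟩
      rw [SetLike.mem_coe, Ideal.mem_colon_span_singleton]
      obtain ⟨S'', hS''F, hS''lt, hdiff⟩ := hq
      have hXmul : (X q : MvPolynomial (Fin n) K) * monomial (eS Si) 1
          = monomial (Finsupp.single q 1 + eS Si) 1 := by
        rw [MvPolynomial.X, MvPolynomial.monomial_mul, one_mul]
      rw [hEarlier, hXmul, mem_ideal_span_monomial_image]
      intro xi hxi
      have hxi' : xi = Finsupp.single q 1 + eS Si := by
        rw [MvPolynomial.mem_support_iff, MvPolynomial.coeff_monomial] at hxi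
        by_contra hne
        rw [if_neg (fun h => hne h.symm)] at hxi
        exact hxi rfl
      subst hxi'
      refine ⟨eS S'', ⟨S'', ⟨hS''F, hS''lt⟩, rfl⟩, ?_⟩
      rw [eS_le_iff]
      intro v hv
      rw [Finsupp.add_apply]
      by_cases hvSi : v ∈ Si
      · rw [eS_apply_mem hvSi]; omega
      · have : v ∈ S'' \ Si := Finset.mem_sdiff.mpr ⟨hv, hvSi⟩
        rw [hdiff, Finset.mem_singleton] at this
        subst this
        rw [Finsupp.single_apply, if_pos rfl]
        omega

end HSaux

end Main

/-- **Corollary 3.5 (Ficarra–Herzog).**  Let `[n]` be partitioned into nonempty parts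
`V_1,…,V_r`, each a set of consecutive integers (encoded by a surjective part function
`p : Fin n → Fin r` whose fibres are order-convex), and let `G` be the corresponding
complete multipartite graph.  Then the natural order is a perfect elimination order of
`Gᶜ`, and every homological shift ideal `HS_k(I(G))` has linear quotients. -/
theorem HS_k_linearQuotients_of_complete_multipartite
    {K : Type*} [Field K] {n r : ℕ} (p : Fin n → Fin r)
    (hsurj : Function.Surjective p)
    (hconsec : ∀ a b c : Fin n, a ≤ b → b ≤ c → p a = p c → p a = p b) :
    natPEO (multipartiteGraph p)ᶜ ∧
    ∀ k : ℕ, HasLinearQuotients (Ideal.span (HSgens K (multipartiteGraph p) k)) := by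
  constructor
  · intro i j k hij hik hjk haij haik
    rw [SimpleGraph.compl_adj] at haij haik ⊢
    refine ⟨hjk, ?_⟩
    intro h
    have h1 : p i = p j := not_not.mp haij.2
    have h2 : p i = p k := not_not.mp haik.2
    exact h (h1.symm.trans h2)
  · exact fun k => HSaux.main p hconsec k
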